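/- For a purely atomic Lévy measure ν = Σ_{j≠M} κ^j·δ_{x^j} with κ^j ≥ 0, the double exponential tail function ψ(ν, x) (defined as ∫_{−∞}^x (e^x − e^z) ν(dz) for x < 0 and ∫_x^∞ (e^z − e^x) ν(dz) for x > 0) satisfies the Fourier identity: for all ξ ∈ ℝ, ∫_ℝ e^{−2πixξ} ψ(ν, x) dx · (−2π)(2πξ² + iξ) = Σ_{j≠M} κ^j·( e^{(1−2πiξ)x^j} − (1 − 2πiξ)e^{x^j} − 2πiξ ). -/

import Mathlib

open MeasureTheory Complex

noncomputable def expTailPhi (a : ℝ) (xx : ℝ) : ℝ :=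
  if xx < 0 then (if a ≤ xx then Real.exp xx - Real.exp a else 0)
  else if 0 < xx then (if xx ≤ a then Real.exp a - Real.exp xx else 0) else 0

lemma expTailPhi_eq_indicator_neg {a : ℝ} (ha : a < 0) :
    expTailPhi a = Set.indicator (Set.Ico a 0) (fun xx => Real.exp xx - Real.exp a) := by
  funext xx
  unfold expTailPhi
  by_cases h : xx ∈ Set.Ico a 0
  · obtain ⟨h1, h2⟩ := Set.mem_Ico.mp h
    rw [Set.indicator_of_mem h]
    simp [h1, h2]
  · rw [Set.indicator_of_notMem h]
    simp only [Set.mem_Ico, not_and, not_lt] at h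
    rcases lt_trichotomy xx 0 with h0 | h0 | h0
    · have : ¬ (a ≤ xx) := fun hc => absurd (h hc) (not_le.mpr h0)
      simp [h0, this]
    · simp [h0]
    · have : ¬ (xx ≤ a) := not_le.mpr (ha.trans h0)
      simp [h0, not_lt.mpr h0.le, this]

lemma expTailPhi_eq_indicator_pos {a : ℝ} (ha : 0 < a) :
    expTailPhi a = Set.indicator (Set.Ioc 0 a) (fun xx => Real.exp a - Real.exp xx) := by
  funext xx
  unfold expTailPhi
  by_cases h : xx ∈ Set.Ioc 0 a
  · obtain ⟨h1, h2⟩ := Set.mem_Ioc.mp h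
    rw [Set.indicator_of_mem h]
    simp [h1, h2, not_lt.mpr h1.le]
  · rw [Set.indicator_of_notMem h]
    simp only [Set.mem_Ioc, not_and, not_le] at h
    rcases lt_trichotomy xx 0 with h0 | h0 | h0
    · have : ¬ (a ≤ xx) := not_le.mpr (h0.trans ha)
      simp [h0, this]
    · simp [h0]
    · have : ¬ (xx ≤ a) := not_le.mpr (h h0)
      simp [h0, not_lt.mpr h0.le, this]

lemma expTailPhi_zero : expTailPhi 0 = fun _ => 0 := by
  funext xx
  unfold expTailPhi
  rcases lt_trichotomy xx 0 with h0 | h0 | h0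
  · simp [h0, not_le.mpr h0]
  · simp [h0]
  · simp [h0, not_lt.mpr h0.le, not_le.mpr h0]

lemma expTail_integrable (s : ℂ) (a : ℝ) :
    Integrable (fun xx : ℝ => Complex.exp (s * xx) * (expTailPhi a xx : ℂ)) := by
  rcases lt_trichotomy a 0 with ha | ha | ha
  · have heq : (fun xx : ℝ => Complex.exp (s * xx) * (expTailPhi a xx : ℂ)) =
        Set.indicator (Set.Ico a 0)
          (fun xx : ℝ => Complex.exp (s * xx) * ((Real.exp xx - Real.exp a : ℝ) : ℂ)) := by
      funext xx
      rw [expTailPhi_eq_indicator_neg ha]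
      by_cases h : xx ∈ Set.Ico a 0
      · simp [Set.indicator_of_mem h]
      · simp [Set.indicator_of_notMem h]
    rw [heq, integrable_indicator_iff measurableSet_Ico]
    have hc : Continuous (fun xx : ℝ => Complex.exp (s * xx) * ((Real.exp xx - Real.exp a : ℝ) : ℂ)) := by
      fun_prop
    exact (hc.integrableOn_Icc).mono_set Set.Ico_subset_Icc_self
  · subst ha
    rw [expTailPhi_zero]
    simpa using integrable_zero ℝ ℂ (volume : Measure ℝ)
  · have heq : (fun xx : ℝ => Complex.exp (s * xx) * (expTailPhi a xx : ℂ)) =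
        Set.indicator (Set.Ioc 0 a)
          (fun xx : ℝ => Complex.exp (s * xx) * ((Real.exp a - Real.exp xx : ℝ) : ℂ)) := by
      funext xx
      rw [expTailPhi_eq_indicator_pos ha]
      by_cases h : xx ∈ Set.Ioc 0 a
      · simp [Set.indicator_of_mem h]
      · simp [Set.indicator_of_notMem h]
    rw [heq, integrable_indicator_iff measurableSet_Ioc]
    have hc : Continuous (fun xx : ℝ => Complex.exp (s * xx) * ((Real.exp a - Real.exp xx : ℝ) : ℂ)) := by
      fun_prop
    exact (hc.integrableOn_Icc).mono_set Set.Ioc_subset_Icc_self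

lemma hasDerivAt_cexp_mul (c : ℂ) (t : ℝ) :
    HasDerivAt (fun y : ℝ => Complex.exp (c * y)) (c * Complex.exp (c * t)) t := by
  have h1 : HasDerivAt (fun z : ℂ => Complex.exp (c * z)) (Complex.exp (c * t) * c) (t : ℂ) :=
    (Complex.hasDerivAt_exp (c * t)).comp (t : ℂ) ((hasDerivAt_id (t : ℂ)).const_mul c |>.congr_deriv (by ring))
  have := h1.comp_ofReal
  convert this using 1
  ring

lemma expTail_atom (s : ℂ) {a : ℝ} (ha : a ≠ 0) :
    (∫ xx : ℝ, Complex.exp (s * xx) * (expTailPhi a xx : ℂ)) * (s * (s + 1)) =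
      Complex.exp ((1 + s) * a) - (1 + s) * Real.exp a + s := by
  have hexp : ∀ t : ℝ, Complex.exp (s * t) * (Real.exp t : ℂ) = Complex.exp ((1 + s) * t) := by
    intro t
    rw [Complex.ofReal_exp, ← Complex.exp_add]
    ring_nf
  rcases lt_trichotomy a 0 with hao | hao | hao
  · have h1 : (∫ xx : ℝ, Complex.exp (s * xx) * (expTailPhi a xx : ℂ)) =
        ∫ xx in a..0, Complex.exp (s * xx) * ((Real.exp xx - Real.exp a : ℝ) : ℂ) := by
      rw [intervalIntegral.integral_of_le hao.le, integral_Ioc_eq_integral_Ioo,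
        ← integral_Ico_eq_integral_Ioo]
      have heq : (fun xx : ℝ => Complex.exp (s * xx) * (expTailPhi a xx : ℂ)) =
          Set.indicator (Set.Ico a 0)
            (fun xx : ℝ => Complex.exp (s * xx) * ((Real.exp xx - Real.exp a : ℝ) : ℂ)) := by
        funext xx
        rw [expTailPhi_eq_indicator_neg hao]
        by_cases h : xx ∈ Set.Ico a 0
        · simp [Set.indicator_of_mem h]
        · simp [Set.indicator_of_notMem h]
      rw [heq, integral_indicator measurableSet_Ico]
    rw [h1, ← intervalIntegral.integral_mul_const]
    have hci : IntervalIntegrable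
        (fun xx : ℝ => Complex.exp (s * xx) * ((Real.exp xx - Real.exp a : ℝ) : ℂ) * (s * (s + 1)))
        volume a 0 := by
      apply Continuous.intervalIntegrable
      fun_prop
    have hderiv : ∀ t ∈ Set.uIcc a (0:ℝ),
        HasDerivAt (fun t : ℝ => s * Complex.exp ((1 + s) * t) - (1 + s) * (Real.exp a : ℂ) * Complex.exp (s * t))
          (Complex.exp (s * t) * ((Real.exp t - Real.exp a : ℝ) : ℂ) * (s * (s + 1))) t := by
      intro t _
      have hd1 := (hasDerivAt_cexp_mul (1 + s) t).const_mul s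
      have hd2 := (hasDerivAt_cexp_mul s t).const_mul ((1 + s) * (Real.exp a : ℂ))
      have := hd1.sub hd2
      refine this.congr_deriv ?_
      rw [← hexp t]
      push_cast
      ring
    rw [intervalIntegral.integral_eq_sub_of_hasDerivAt hderiv hci]
    rw [Complex.ofReal_zero, mul_zero, Complex.exp_zero, mul_zero, Complex.exp_zero, ← hexp a]
    push_cast
    ring
  · exact absurd hao ha
  · have h1 : (∫ xx : ℝ, Complex.exp (s * xx) * (expTailPhi a xx : ℂ)) =
        ∫ xx in (0:ℝ)..a, Complex.exp (s * xx) * ((Real.exp a - Real.exp xx : ℝ) : ℂ) := by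
      rw [intervalIntegral.integral_of_le hao.le]
      have heq : (fun xx : ℝ => Complex.exp (s * xx) * (expTailPhi a xx : ℂ)) =
          Set.indicator (Set.Ioc 0 a)
            (fun xx : ℝ => Complex.exp (s * xx) * ((Real.exp a - Real.exp xx : ℝ) : ℂ)) := by
        funext xx
        rw [expTailPhi_eq_indicator_pos hao]
        by_cases h : xx ∈ Set.Ioc 0 a
        · simp [Set.indicator_of_mem h]
        · simp [Set.indicator_of_notMem h]
      rw [heq, integral_indicator measurableSet_Ioc]
    rw [h1, ← intervalIntegral.integral_mul_const]
    have hci : IntervalIntegrable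
        (fun xx : ℝ => Complex.exp (s * xx) * ((Real.exp a - Real.exp xx : ℝ) : ℂ) * (s * (s + 1)))
        volume 0 a := by
      apply Continuous.intervalIntegrable
      fun_prop
    have hderiv : ∀ t ∈ Set.uIcc (0:ℝ) a,
        HasDerivAt (fun t : ℝ => (1 + s) * (Real.exp a : ℂ) * Complex.exp (s * t) - s * Complex.exp ((1 + s) * t))
          (Complex.exp (s * t) * ((Real.exp a - Real.exp t : ℝ) : ℂ) * (s * (s + 1))) t := by
      intro t _
      have hd1 := (hasDerivAt_cexp_mul s t).const_mul ((1 + s) * (Real.exp a : ℂ))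
      have hd2 := (hasDerivAt_cexp_mul (1 + s) t).const_mul s
      have := hd1.sub hd2
      refine this.congr_deriv ?_
      rw [← hexp t]
      push_cast
      ring
    rw [intervalIntegral.integral_eq_sub_of_hasDerivAt hderiv hci]
    rw [Complex.ofReal_zero, mul_zero, Complex.exp_zero, mul_zero, Complex.exp_zero, ← hexp a]
    push_cast
    ring

/-- Fourier identity for the double exponential tail `ψ` of the purely atomic
Lévy measure `ν = Σ_{j≠M} κ^j δ_{x^j}`: for all `ξ`,
`(∫ e^{−2πixξ} ψ(ν,x) dx) · (−2π)(2πξ² + iξ)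
  = Σ_{j≠M} κ^j (e^{(1−2πiξ)x^j} − (1−2πiξ)e^{x^j} − 2πiξ)`. -/
theorem exponential_tail_fourier_identity
    (N Mc : ℕ) (hN : Odd N) (hM : Mc = (N + 1) / 2) (dx : ℝ) (hdx : 0 < dx)
    (x : ℕ → ℝ) (hx : ∀ j, x j = ((j : ℝ) - (Mc : ℝ)) * dx)
    (κ : ℕ → ℝ) (hκ : ∀ j, 0 ≤ κ j)
    (S : Finset ℕ) (hS : S = (Finset.Icc 1 N).erase Mc)
    (ψ : ℝ → ℝ)
    (hψneg : ∀ xx : ℝ, xx < 0 →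
      ψ xx = ∑ j ∈ S, if x j ≤ xx then κ j * (Real.exp xx - Real.exp (x j)) else 0)
    (hψpos : ∀ xx : ℝ, 0 < xx →
      ψ xx = ∑ j ∈ S, if xx ≤ x j then κ j * (Real.exp (x j) - Real.exp xx) else 0)
    (hψ0 : ψ 0 = 0)
    (hψint : Integrable ψ) :
    ∀ ξ : ℝ,
      (∫ xx : ℝ, Complex.exp (-(2 * Real.pi * Complex.I * xx * ξ)) * (ψ xx : ℂ)) *
          ((-(2 * Real.pi)) * (2 * Real.pi * ξ ^ 2 + Complex.I * ξ)) =
        ∑ j ∈ S, (κ j : ℂ) *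
          (Complex.exp ((1 - 2 * Real.pi * Complex.I * ξ) * (x j : ℂ)) -
            (1 - 2 * Real.pi * Complex.I * ξ) * Real.exp (x j) -
            2 * Real.pi * Complex.I * ξ) := by
  intro ξ
  set s : ℂ := -(2 * Real.pi * Complex.I * ξ) with hs
  -- atoms are nonzero
  have hane : ∀ j ∈ S, x j ≠ 0 := by
    intro j hj
    rw [hS, Finset.mem_erase] at hj
    rw [hx j]
    refine mul_ne_zero (sub_ne_zero.mpr ?_) hdx.ne'
    exact_mod_cast hj.1
  -- ψ as a sum of atoms
  have hψsum : ∀ xx : ℝ, ψ xx = ∑ j ∈ S, κ j * expTailPhi (x j) xx := by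
    intro xx
    rcases lt_trichotomy xx 0 with h0 | h0 | h0
    · rw [hψneg xx h0]
      refine Finset.sum_congr rfl fun j _ => ?_
      unfold expTailPhi
      simp [h0, mul_ite]
    · subst h0
      rw [hψ0]
      symm
      refine Finset.sum_eq_zero fun j _ => ?_
      unfold expTailPhi
      simp
    · rw [hψpos xx h0]
      refine Finset.sum_congr rfl fun j _ => ?_
      unfold expTailPhi
      simp [h0, not_lt.mpr h0.le, mul_ite]
  -- rewrite the integral as a sum of atomic integrals
  have hint : (∫ xx : ℝ, Complex.exp (-(2 * Real.pi * Complex.I * xx * ξ)) * (ψ xx : ℂ)) =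
      ∑ j ∈ S, (κ j : ℂ) * ∫ xx : ℝ, Complex.exp (s * xx) * (expTailPhi (x j) xx : ℂ) := by
    have heq : ∀ xx : ℝ,
        Complex.exp (-(2 * Real.pi * Complex.I * xx * ξ)) * (ψ xx : ℂ) =
        ∑ j ∈ S, (κ j : ℂ) * (Complex.exp (s * xx) * (expTailPhi (x j) xx : ℂ)) := by
      intro xx
      have he : (-(2 * Real.pi * Complex.I * xx * ξ) : ℂ) = s * xx := by rw [hs]; ring
      rw [he, hψsum xx]
      push_cast
      rw [Finset.mul_sum]
      refine Finset.sum_congr rfl fun j _ => ?_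
      ring
    simp_rw [heq]
    rw [integral_finset_sum S (fun j _ => (expTail_integrable s (x j)).const_mul _)]
    refine Finset.sum_congr rfl fun j _ => ?_
    exact integral_const_mul _ _
  -- the multiplier
  have hfac : ((-(2 * (Real.pi : ℂ))) * (2 * Real.pi * ξ ^ 2 + Complex.I * ξ)) = s * (s + 1) := by
    rw [hs]
    linear_combination (-4 * (Real.pi : ℂ) ^ 2 * (ξ : ℂ) ^ 2) * Complex.I_sq
  rw [hint, hfac, Finset.sum_mul]
  refine Finset.sum_congr rfl fun j hj => ?_
  rw [mul_assoc, expTail_atom s (hane j hj)]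
  have h1 : (1 - 2 * Real.pi * Complex.I * ξ : ℂ) = 1 + s := by rw [hs]; ring
  rw [h1, hs]
  ring
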